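/- arXiv:2503.07571 — 2 statements merged into one kernel-verified Lean document; each statement's English description precedes it below -/
import Mathlib

section
/- Let m : [0, τ₀] → ℝ be a positive differentiable function with m(0) = 1 satisfying m'(θ) ≤ δ·m(θ) + ((1 + e^{θΔ})/2)·V·θ·m(θ) + ε·(M+δ)·e^{2θM} for all θ ∈ [0, τ₀], and suppose m(θ) ≥ e^{−θM} for all θ ∈ [0, τ₀]. Then for all τ ∈ [0, τ₀], log m(τ) ≤ δτ + (V/2)·(τ²/2 + (e^{τΔ}(τΔ − 1) + 1)/Δ²) + ε·(M+δ)·(e^{2τM} − 1)/(2M), where δ, Δ, V, M > 0 and ε ≥ 0 are constants. -/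
theorem stmt6 (τ₀ δ Δ V M ε : ℝ) (hτ₀ : 0 ≤ τ₀) (hδ : 0 < δ) (hΔ : 0 < Δ)
    (hV : 0 < V) (hM : 0 < M) (hε : 0 ≤ ε)
    (m m' : ℝ → ℝ) (hpos : ∀ θ ∈ Set.Icc 0 τ₀, 0 < m θ) (hm0 : m 0 = 1)
    (hderiv : ∀ θ ∈ Set.Icc 0 τ₀, HasDerivAt m (m' θ) θ)
    (hineq : ∀ θ ∈ Set.Icc 0 τ₀,
      m' θ ≤ δ * m θ + (1 + Real.exp (θ * Δ)) / 2 * V * θ * m θ +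
        ε * (M + δ) * Real.exp (2 * θ * M))
    (hlow : ∀ θ ∈ Set.Icc 0 τ₀, Real.exp (-θ * M) ≤ m θ) :
    ∀ τ ∈ Set.Icc 0 τ₀,
      Real.log (m τ) ≤ δ * τ +
        V / 2 * (τ ^ 2 / 2 + (Real.exp (τ * Δ) * (τ * Δ - 1) + 1) / Δ ^ 2) +
        ε * (M + δ) * (Real.exp (2 * τ * M) - 1) / (2 * M) := by
  set A : ℝ → ℝ := fun θ =>
    δ * θ + V / 2 * (θ ^ 2 / 2 + (Real.exp (θ * Δ) * (θ * Δ - 1) + 1) / Δ ^ 2) with hAdef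
  set C : ℝ → ℝ := fun θ => ε * (M + δ) * (Real.exp (2 * θ * M) - 1) / (2 * M) with hCdef
  -- derivative of A
  have hA' : ∀ θ : ℝ, HasDerivAt A (δ + (1 + Real.exp (θ * Δ)) / 2 * V * θ) θ := by
    intro θ
    have he : HasDerivAt (fun θ : ℝ => Real.exp (θ * Δ)) (Real.exp (θ * Δ) * Δ) θ := by
      simpa [Function.comp_def] using (Real.hasDerivAt_exp (θ * Δ)).comp θ ((hasDerivAt_id θ).mul_const Δ)
    have h2 : HasDerivAt (fun θ : ℝ => θ * Δ - 1) Δ θ := by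
      simpa using ((hasDerivAt_id θ).mul_const Δ).sub_const 1
    have h3 : HasDerivAt (fun θ : ℝ => Real.exp (θ * Δ) * (θ * Δ - 1))
        (Real.exp (θ * Δ) * Δ * (θ * Δ - 1) + Real.exp (θ * Δ) * Δ) θ := he.mul h2
    have h4 : HasDerivAt (fun θ : ℝ => θ ^ 2 / 2) θ θ := by
      simpa using (hasDerivAt_pow 2 θ).div_const 2
    have h5 : HasDerivAt A
        (δ * 1 + V / 2 * (θ + (Real.exp (θ * Δ) * Δ * (θ * Δ - 1) + Real.exp (θ * Δ) * Δ) / Δ ^ 2)) θ := by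
      exact ((hasDerivAt_id θ).const_mul δ).add
        ((h4.add ((h3.add_const 1).div_const (Δ ^ 2))).const_mul (V / 2))
    convert h5 using 1
    field_simp
    ring
  -- derivative of C
  have hC' : ∀ θ : ℝ, HasDerivAt C (ε * (M + δ) * Real.exp (2 * θ * M)) θ := by
    intro θ
    have he : HasDerivAt (fun θ : ℝ => Real.exp (2 * θ * M)) (Real.exp (2 * θ * M) * (2 * M)) θ := by
      have : HasDerivAt (fun θ : ℝ => 2 * θ * M) (2 * M) θ := by
        simpa using (((hasDerivAt_id θ).const_mul 2).mul_const M)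
      simpa [Function.comp_def] using (Real.hasDerivAt_exp (2 * θ * M)).comp θ this
    have h5 : HasDerivAt C (ε * (M + δ) * (Real.exp (2 * θ * M) * (2 * M)) / (2 * M)) θ := by
      exact ((he.sub_const 1).const_mul (ε * (M + δ))).div_const (2 * M)
    convert h5 using 1
    field_simp
  -- A nonneg on [0, τ₀]
  have hAnonneg : ∀ θ : ℝ, 0 ≤ θ → 0 ≤ A θ := by
    intro θ hθ
    have hexp : 0 ≤ Real.exp (θ * Δ) * (θ * Δ - 1) + 1 := by
      have hprod : Real.exp (θ * Δ) * Real.exp (-(θ * Δ)) = 1 := by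
        rw [← Real.exp_add]; simp
      nlinarith [Real.add_one_le_exp (-(θ * Δ)), Real.exp_pos (θ * Δ), hprod]
    have : 0 ≤ θ ^ 2 / 2 + (Real.exp (θ * Δ) * (θ * Δ - 1) + 1) / Δ ^ 2 := by positivity
    have h1 : 0 ≤ δ * θ := by positivity
    have h2 : 0 ≤ V / 2 := by positivity
    simp only [hAdef]
    nlinarith
  have hCnonneg : ∀ θ : ℝ, 0 ≤ θ → 0 ≤ C θ := by
    intro θ hθ
    have : (1 : ℝ) ≤ Real.exp (2 * θ * M) := by
      rw [show (1:ℝ) = Real.exp 0 by simp]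
      exact Real.exp_le_exp.2 (by positivity)
    simp only [hCdef]
    have hMδ : (0:ℝ) ≤ M + δ := by linarith
    have : 0 ≤ ε * (M + δ) * (Real.exp (2 * θ * M) - 1) := by
      apply mul_nonneg (mul_nonneg hε hMδ); linarith
    positivity
  -- the comparison function
  set h : ℝ → ℝ := fun θ => m θ * Real.exp (-(A θ)) - C θ with hhdef
  have hcont : ContinuousOn h (Set.Icc 0 τ₀) := by
    intro x hx
    have hm : ContinuousWithinAt m (Set.Icc 0 τ₀) x :=
      (hderiv x hx).continuousAt.continuousWithinAt
    have hA : ContinuousWithinAt (fun θ => Real.exp (-(A θ))) (Set.Icc 0 τ₀) x :=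
      ((hA' x).continuousAt.neg.rexp).continuousWithinAt
    have hC : ContinuousWithinAt C (Set.Icc 0 τ₀) x := (hC' x).continuousAt.continuousWithinAt
    exact (hm.mul hA).sub hC
  have hanti : AntitoneOn h (Set.Icc 0 τ₀) := by
    have hint : interior (Set.Icc (0:ℝ) τ₀) = Set.Ioo 0 τ₀ := interior_Icc
    apply antitoneOn_of_deriv_nonpos (convex_Icc 0 τ₀) hcont
    · rw [hint]
      intro x hx
      have hx' : x ∈ Set.Icc 0 τ₀ := Set.mem_Icc.2 ⟨le_of_lt hx.1, le_of_lt hx.2⟩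
      exact (((hderiv x hx').mul ((hA' x).neg.exp)).sub (hC' x)).differentiableAt.differentiableWithinAt
    · rw [hint]
      intro x hx
      have hx' : x ∈ Set.Icc 0 τ₀ := Set.mem_Icc.2 ⟨le_of_lt hx.1, le_of_lt hx.2⟩
      have hd : HasDerivAt h
          (m' x * Real.exp (-(A x)) + m x * (Real.exp (-(A x)) * -(δ + (1 + Real.exp (x * Δ)) / 2 * V * x))
            - ε * (M + δ) * Real.exp (2 * x * M)) x :=
        ((hderiv x hx').mul ((hA' x).neg.exp)).sub (hC' x)
      rw [hd.deriv]
      have hE1 : Real.exp (-(A x)) ≤ 1 := by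
        rw [show (1:ℝ) = Real.exp 0 by simp]
        exact Real.exp_le_exp.2 (by linarith [hAnonneg x (le_of_lt hx.1)])
      have hEpos : 0 < Real.exp (-(A x)) := Real.exp_pos _
      have hb : 0 ≤ ε * (M + δ) * Real.exp (2 * x * M) := by positivity
      have key : m' x - (δ + (1 + Real.exp (x * Δ)) / 2 * V * x) * m x
          ≤ ε * (M + δ) * Real.exp (2 * x * M) := by
        have := hineq x hx'
        nlinarith [this]
      nlinarith [mul_le_mul_of_nonneg_right key (le_of_lt hEpos),
        mul_le_mul_of_nonneg_left hE1 hb]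
  intro τ hτ
  have hτmem := hτ
  have h0mem : (0:ℝ) ∈ Set.Icc (0:ℝ) τ₀ := Set.mem_Icc.2 ⟨le_refl 0, hτ₀⟩
  have hle : h τ ≤ h 0 := hanti h0mem hτ hτ.1
  have hh0 : h 0 = 1 := by simp [hhdef, hm0, hAdef, hCdef]
  have hmle : m τ ≤ (1 + C τ) * Real.exp (A τ) := by
    have := hle
    rw [hh0] at this
    have hEpos : 0 < Real.exp (-(A τ)) := Real.exp_pos _
    have h2 : m τ * Real.exp (-(A τ)) ≤ 1 + C τ := by
      simp only [hhdef] at this; linarith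
    have h3 := mul_le_mul_of_nonneg_right h2 (le_of_lt (Real.exp_pos (A τ)))
    have h4 : m τ * Real.exp (-(A τ)) * Real.exp (A τ) = m τ := by
      rw [mul_assoc, ← Real.exp_add]; simp
    rw [h4] at h3; exact h3
  have hCτ : 0 ≤ C τ := hCnonneg τ hτ.1
  have h1C : 0 < 1 + C τ := by linarith
  have hlog : Real.log (m τ) ≤ Real.log ((1 + C τ) * Real.exp (A τ)) :=
    Real.log_le_log (hpos τ hτ) hmle
  rw [Real.log_mul (ne_of_gt h1C) (ne_of_gt (Real.exp_pos _)), Real.log_exp] at hlog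
  have hlog1C : Real.log (1 + C τ) ≤ C τ := by
    have := Real.log_le_sub_one_of_pos h1C
    linarith
  have final : Real.log (m τ) ≤ A τ + C τ := by linarith
  calc Real.log (m τ) ≤ A τ + C τ := final
    _ = _ := by simp only [hAdef, hCdef]
end

section
/- With L, Ψ, φ as above and p* ∈ (0,1) a fixed point of p ↦ φ(Ψ(p)) (i.e. φ(Ψ(p*)) = p*), we have (d/dp)[φ(Ψ(p))] evaluated at p* is < 1 if and only if L''(p*) < 0. -/
/-- At a fixed point `p*` of `p ↦ φ(Ψ(p))`, the derivative of `p ↦ φ(Ψ(p))` is `< 1`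
iff `L''(p*) < 0`. -/
theorem stmt11 (K : ℕ) (β : Fin (K + 1) → ℝ) (hβ : ∀ i : Fin (K + 1), i ≠ 0 → 0 ≤ β i)
    (m : Fin (K + 1) → ℕ) (hm0 : m 0 = 1) (hmono : Monotone m)
    (hm1 : ∀ i : Fin (K + 1), i ≠ 0 → 1 < m i)
    (L Ψ φ : ℝ → ℝ)
    (hL : ∀ p, L p = (∑ i, β i * p ^ m i) -
      (1 / 2 * p * Real.log p + 1 / 2 * (1 - p) * Real.log (1 - p)))
    (hΨ : ∀ p, Ψ p = ∑ i, 2 * β i * (m i : ℝ) * p ^ (m i - 1))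
    (hφ : ∀ z, φ z = Real.exp z / (1 + Real.exp z))
    (pstar : ℝ) (hpstar : pstar ∈ Set.Ioo (0 : ℝ) 1) (hfix : φ (Ψ pstar) = pstar) :
    deriv (fun p => φ (Ψ p)) pstar < 1 ↔ deriv (deriv L) pstar < 0 := by
  obtain ⟨hp0, hp1⟩ := hpstar
  have h1p : (0:ℝ) < 1 - pstar := by linarith
  set z := Ψ pstar with hz
  have hez : (0:ℝ) < 1 + Real.exp z := by positivity
  have hφfun : φ = fun y => Real.exp y / (1 + Real.exp y) := funext hφ
  have hfix' : Real.exp z / (1 + Real.exp z) = pstar := by rw [← hφ]; exact hfix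
  -- derivative of φ
  have hφd : HasDerivAt φ (Real.exp z / (1 + Real.exp z) ^ 2) z := by
    have h := (Real.hasDerivAt_exp z).div
      ((hasDerivAt_const z (1:ℝ)).add (Real.hasDerivAt_exp z)) hez.ne'
    rw [hφfun]
    exact h.congr_deriv (by simp only [Pi.add_apply]; ring)
  -- derivative of Ψ
  have hΨfun : Ψ = fun p => ∑ i, 2 * β i * (m i : ℝ) * p ^ (m i - 1) := funext hΨ
  set S : ℝ := ∑ i, β i * (m i : ℝ) * (((m i - 1 : ℕ) : ℝ) * pstar ^ (m i - 1 - 1)) with hS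
  have hΨd : HasDerivAt Ψ (2 * S) pstar := by
    rw [hΨfun]
    have h := HasDerivAt.fun_sum (fun i (_ : i ∈ Finset.univ) =>
      (hasDerivAt_pow (m i - 1) pstar).const_mul (2 * β i * (m i : ℝ)))
    refine h.congr_deriv ?_
    rw [hS, Finset.mul_sum]
    apply Finset.sum_congr rfl
    intros; ring
  -- derivative of the composition
  have hcomp : HasDerivAt (fun p => φ (Ψ p))
      (Real.exp z / (1 + Real.exp z) ^ 2 * (2 * S)) pstar := hφd.comp pstar hΨd
  have hkey : Real.exp z / (1 + Real.exp z) ^ 2 = pstar * (1 - pstar) := by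
    rw [← hfix']
    field_simp
    ring
  -- first derivative of L on Ioo 0 1
  have hLfun : L = fun p => (∑ i, β i * p ^ m i) -
      (1 / 2 * p * Real.log p + 1 / 2 * (1 - p) * Real.log (1 - p)) := funext hL
  set g : ℝ → ℝ := fun p => (∑ i, β i * (m i : ℝ) * p ^ (m i - 1)) -
      (1/2 * (Real.log p + 1) + 1/2 * (-(Real.log (1 - p) + 1))) with hg
  have hLd : ∀ p ∈ Set.Ioo (0:ℝ) 1, HasDerivAt L (g p) p := by
    intro p hp
    have hq0 : (0:ℝ) < p := hp.1
    have hq1 : (0:ℝ) < 1 - p := by linarith [hp.2]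
    rw [hLfun]
    have hsum : HasDerivAt (fun p : ℝ => ∑ i, β i * p ^ m i)
        (∑ i, β i * (m i : ℝ) * p ^ (m i - 1)) p := by
      have h := HasDerivAt.fun_sum (fun i (_ : i ∈ Finset.univ) =>
        (hasDerivAt_pow (m i) p).const_mul (β i))
      refine h.congr_deriv ?_
      apply Finset.sum_congr rfl
      intros; ring
    have h1 : HasDerivAt (fun p : ℝ => 1 / 2 * p * Real.log p)
        (1/2 * (Real.log p + 1)) p := by
      simpa [mul_assoc] using (Real.hasDerivAt_mul_log hq0.ne').const_mul (1/2 : ℝ)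
    have hin : HasDerivAt (fun p : ℝ => 1 - p) (-1) p := by
      simpa using (hasDerivAt_id p).const_sub (1:ℝ)
    have h2 : HasDerivAt (fun p : ℝ => 1 / 2 * (1 - p) * Real.log (1 - p))
        (1/2 * (-(Real.log (1 - p) + 1))) p := by
      have h := ((Real.hasDerivAt_mul_log hq1.ne').comp p hin).const_mul (1/2 : ℝ)
      simp only [Function.comp] at h
      have e : (fun x : ℝ => 1 / 2 * (1 - x) * Real.log (1 - x)) =
          (fun y => 1 / 2 * ((1 - y) * Real.log (1 - y))) := by funext x; ring
      rw [e]; exact h.congr_deriv (by ring)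
    exact hsum.sub (h1.add h2)
  -- deriv L agrees with g near pstar
  have hev : deriv L =ᶠ[nhds pstar] g := by
    filter_upwards [Ioo_mem_nhds hp0 hp1] with p hp using (hLd p hp).deriv
  -- derivative of g at pstar
  have hlogp : HasDerivAt (fun p : ℝ => Real.log p) pstar⁻¹ pstar :=
    Real.hasDerivAt_log hp0.ne'
  have hin : HasDerivAt (fun p : ℝ => 1 - p) (-1) pstar := by
    simpa using (hasDerivAt_id pstar).const_sub (1:ℝ)
  have hlog1p : HasDerivAt (fun p : ℝ => Real.log (1 - p)) ((1 - pstar)⁻¹ * (-1)) pstar :=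
    (Real.hasDerivAt_log h1p.ne').comp pstar hin
  have hgd : HasDerivAt g (S - (1/2 * pstar⁻¹ + 1/2 * (1 - pstar)⁻¹)) pstar := by
    have hA : HasDerivAt (fun p : ℝ => ∑ i, β i * (m i : ℝ) * p ^ (m i - 1)) S pstar := by
      exact HasDerivAt.fun_sum (fun i (_ : i ∈ Finset.univ) =>
        (hasDerivAt_pow (m i - 1) pstar).const_mul (β i * (m i : ℝ)))
    have hB : HasDerivAt (fun p : ℝ => 1/2 * (Real.log p + 1))
        (1/2 * (pstar⁻¹ + 0)) pstar :=
      (hlogp.add (hasDerivAt_const pstar (1:ℝ))).const_mul (1/2 : ℝ)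
    have hC : HasDerivAt (fun p : ℝ => 1/2 * (-(Real.log (1 - p) + 1)))
        (1/2 * (-((1 - pstar)⁻¹ * (-1) + 0))) pstar :=
      ((hlog1p.add (hasDerivAt_const pstar (1:ℝ))).neg).const_mul (1/2 : ℝ)
    have := hA.sub (hB.add hC)
    exact this.congr_deriv (by ring)
  have hdd : deriv (deriv L) pstar = S - (1/2 * pstar⁻¹ + 1/2 * (1 - pstar)⁻¹) := by
    rw [hev.deriv_eq]
    exact hgd.deriv
  rw [hcomp.deriv, hdd, hkey]
  have hinv : 1/2 * pstar⁻¹ + 1/2 * (1 - pstar)⁻¹ = 1 / (2 * (pstar * (1 - pstar))) := by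
    field_simp
    ring
  rw [hinv, sub_neg, lt_div_iff₀ (by positivity : (0:ℝ) < 2 * (pstar * (1 - pstar)))]
  constructor <;> intro h <;> nlinarith [h]
end
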